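/- Let λ > 0, let I be a finite index set with a subset J ⊆ I, and let (x_i)_{i∈I} and (y_i)_{i∈I} be vectors in ℝ^d such that the linear span of {x_i : i ∈ I} has dimension at most r and the linear span of {y_i : i ∈ I} has dimension at most r. Let A = λ·I_d + ∑_{j∈J} x_j x_jᵀ and B = λ·I_d + ∑_{j∈J} y_j y_jᵀ. Then for every i ∈ I: ‖x_i‖_{A⁻¹} ≤ (1/√λ)·‖x_i − y_i‖₂ + (1 + (2√r/√λ)·√(∑_{j∈J} ‖x_j − y_j‖₂²))·‖y_i‖_{B⁻¹}. -/

import Mathlib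

open Matrix

namespace TransferAux

variable {d : ℕ}

lemma vecMulVec_mulVec' (u w v : Fin d → ℝ) :
    vecMulVec u w *ᵥ v = (w ⬝ᵥ v) • u := by
  ext i
  simp only [mulVec, vecMulVec_apply, dotProduct, Pi.smul_apply, smul_eq_mul, Finset.sum_mul]
  exact Finset.sum_congr rfl fun j _ => by ring

lemma sum_mulVec' {ι : Type*} (s : Finset ι) (M : ι → Matrix (Fin d) (Fin d) ℝ)
    (v : Fin d → ℝ) : (∑ j ∈ s, M j) *ᵥ v = ∑ j ∈ s, (M j *ᵥ v) := by
  ext i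
  simp only [mulVec, dotProduct, Matrix.sum_apply, Finset.sum_apply, Finset.sum_mul]
  exact Finset.sum_comm

lemma dotProduct_sum' {ι : Type*} (s : Finset ι) (v : Fin d → ℝ) (f : ι → Fin d → ℝ) :
    v ⬝ᵥ (∑ j ∈ s, f j) = ∑ j ∈ s, v ⬝ᵥ f j := by
  simp only [dotProduct, Finset.sum_apply, Finset.mul_sum]
  exact Finset.sum_comm

lemma quad_eq {I : Type*} [Fintype I] (J : Finset I) (lam : ℝ) (x : I → Fin d → ℝ)
    (v : Fin d → ℝ) :
    v ⬝ᵥ (lam • (1 : Matrix (Fin d) (Fin d) ℝ) + ∑ j ∈ J, vecMulVec (x j) (x j)) *ᵥ v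
      = lam * (v ⬝ᵥ v) + ∑ j ∈ J, (x j ⬝ᵥ v) ^ 2 := by
  rw [add_mulVec, dotProduct_add, smul_mulVec, one_mulVec, dotProduct_smul,
    sum_mulVec', dotProduct_sum']
  congr 1
  refine Finset.sum_congr rfl fun j _ => ?_
  rw [vecMulVec_mulVec', dotProduct_smul, smul_eq_mul, dotProduct_comm, sq]

lemma herm_aux {I : Type*} [Fintype I] (J : Finset I) (lam : ℝ) (x : I → Fin d → ℝ) :
    (lam • (1 : Matrix (Fin d) (Fin d) ℝ) + ∑ j ∈ J, vecMulVec (x j) (x j)).IsHermitian := by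
  show _ = _
  ext i j
  simp only [conjTranspose_apply, Matrix.add_apply, Matrix.smul_apply, one_apply, Matrix.sum_apply,
    vecMulVec_apply, smul_eq_mul, star_trivial]
  congr 1
  · simp [eq_comm]
  · exact Finset.sum_congr rfl fun k _ => by ring

lemma posdef_aux {I : Type*} [Fintype I] (J : Finset I) {lam : ℝ} (hlam : 0 < lam)
    (x : I → Fin d → ℝ) :
    (lam • (1 : Matrix (Fin d) (Fin d) ℝ) + ∑ j ∈ J, vecMulVec (x j) (x j)).PosDef := by
  refine Matrix.PosDef.of_dotProduct_mulVec_pos (herm_aux J lam x) fun v hv => ?_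
  have h0 : 0 ≤ v ⬝ᵥ v := Finset.sum_nonneg fun i _ => mul_self_nonneg _
  have h1 : 0 < v ⬝ᵥ v :=
    lt_of_le_of_ne h0 fun h => hv (dotProduct_self_eq_zero.1 h.symm)
  have h2 : (0:ℝ) ≤ ∑ j ∈ J, (x j ⬝ᵥ v) ^ 2 := Finset.sum_nonneg fun _ _ => sq_nonneg _
  have := quad_eq J lam x v
  simp only [star_trivial]
  rw [this]
  nlinarith

lemma dot_symm {M : Matrix (Fin d) (Fin d) ℝ} (hM : M.IsHermitian) (u v : Fin d → ℝ) :
    u ⬝ᵥ M *ᵥ v = v ⬝ᵥ M *ᵥ u := by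
  have hs : ∀ i j, M i j = M j i := fun i j => by
    conv_lhs => rw [← hM]
    simp [conjTranspose_apply]
  simp only [dotProduct, mulVec, Finset.mul_sum]
  rw [Finset.sum_comm]
  refine Finset.sum_congr rfl fun i _ => Finset.sum_congr rfl fun j _ => ?_
  rw [hs j i]; ring

lemma psd_dot {M : Matrix (Fin d) (Fin d) ℝ} (hM : M.PosSemidef) (v : Fin d → ℝ) :
    0 ≤ v ⬝ᵥ M *ᵥ v := by
  simpa using hM.dotProduct_mulVec_nonneg v

lemma cs {M : Matrix (Fin d) (Fin d) ℝ} (hsym : M.IsHermitian)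
    (hpsd : M.PosSemidef) (u v : Fin d → ℝ) :
    (u ⬝ᵥ M *ᵥ v) ^ 2 ≤ (u ⬝ᵥ M *ᵥ u) * (v ⬝ᵥ M *ᵥ v) := by
  have key : ∀ t : ℝ, 0 ≤ (v ⬝ᵥ M *ᵥ v) * (t * t) + (2 * (u ⬝ᵥ M *ᵥ v)) * t
      + u ⬝ᵥ M *ᵥ u := by
    intro t
    have h := psd_dot hpsd (u + t • v)
    have expand : (u + t • v) ⬝ᵥ M *ᵥ (u + t • v)
        = (v ⬝ᵥ M *ᵥ v) * (t * t) + (2 * (u ⬝ᵥ M *ᵥ v)) * t + u ⬝ᵥ M *ᵥ u := by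
      rw [mulVec_add, mulVec_smul]
      simp only [add_dotProduct, dotProduct_add, smul_dotProduct, dotProduct_smul,
        smul_eq_mul]
      rw [dot_symm hsym v u]
      ring
    rw [expand] at h
    exact h
  have hd := discrim_le_zero key
  unfold discrim at hd
  nlinarith [hd]

lemma sqrt_triangle {M : Matrix (Fin d) (Fin d) ℝ} (hsym : M.IsHermitian)
    (hpsd : M.PosSemidef) (u v : Fin d → ℝ) :
    Real.sqrt ((u + v) ⬝ᵥ M *ᵥ (u + v))
      ≤ Real.sqrt (u ⬝ᵥ M *ᵥ u) + Real.sqrt (v ⬝ᵥ M *ᵥ v) := by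
  set a := Real.sqrt (u ⬝ᵥ M *ᵥ u) with ha
  set b := Real.sqrt (v ⬝ᵥ M *ᵥ v) with hb
  have ha2 : a ^ 2 = u ⬝ᵥ M *ᵥ u := Real.sq_sqrt (psd_dot hpsd u)
  have hb2 : b ^ 2 = v ⬝ᵥ M *ᵥ v := Real.sq_sqrt (psd_dot hpsd v)
  have h1 : u ⬝ᵥ M *ᵥ v ≤ a * b := by
    have h2 : u ⬝ᵥ M *ᵥ v ≤ Real.sqrt ((u ⬝ᵥ M *ᵥ u) * (v ⬝ᵥ M *ᵥ v)) := by
      calc u ⬝ᵥ M *ᵥ v ≤ |u ⬝ᵥ M *ᵥ v| := le_abs_self _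
        _ = Real.sqrt ((u ⬝ᵥ M *ᵥ v) ^ 2) := (Real.sqrt_sq_eq_abs _).symm
        _ ≤ _ := Real.sqrt_le_sqrt (cs hsym hpsd u v)
    rwa [Real.sqrt_mul (psd_dot hpsd u)] at h2
  have expand : (u + v) ⬝ᵥ M *ᵥ (u + v)
      = u ⬝ᵥ M *ᵥ u + 2 * (u ⬝ᵥ M *ᵥ v) + v ⬝ᵥ M *ᵥ v := by
    rw [mulVec_add]
    simp only [add_dotProduct, dotProduct_add]
    rw [dot_symm hsym v u]
    ring
  have hle : (u + v) ⬝ᵥ M *ᵥ (u + v) ≤ (a + b) ^ 2 := by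
    rw [expand]; nlinarith [h1, ha2, hb2]
  calc Real.sqrt ((u + v) ⬝ᵥ M *ᵥ (u + v)) ≤ Real.sqrt ((a + b) ^ 2) :=
        Real.sqrt_le_sqrt hle
    _ = a + b := Real.sqrt_sq (by positivity)

lemma key_transfer {A B : Matrix (Fin d) (Fin d) ℝ} (hA : A.PosDef) (hB : B.PosDef)
    {c : ℝ} (hc : 0 ≤ c) (hcomp : ∀ v, v ⬝ᵥ B *ᵥ v ≤ c ^ 2 * (v ⬝ᵥ A *ᵥ v))
    (w : Fin d → ℝ) :
    Real.sqrt (w ⬝ᵥ A⁻¹ *ᵥ w) ≤ c * Real.sqrt (w ⬝ᵥ B⁻¹ *ᵥ w) := by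
  have hAinv := hA.inv
  have hBinv := hB.inv
  have hAu : A * A⁻¹ = 1 := mul_nonsing_inv A (isUnit_iff_ne_zero.2 hA.det_pos.ne')
  have hBu : B * B⁻¹ = 1 := mul_nonsing_inv B (isUnit_iff_ne_zero.2 hB.det_pos.ne')
  set v := A⁻¹ *ᵥ w with hv
  set z := B⁻¹ *ᵥ w with hz
  have hAv : A *ᵥ v = w := by rw [hv, mulVec_mulVec, hAu, one_mulVec]
  have hBz : B *ᵥ z = w := by rw [hz, mulVec_mulVec, hBu, one_mulVec]
  have hq0 : 0 ≤ w ⬝ᵥ A⁻¹ *ᵥ w := psd_dot hAinv.posSemidef w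
  have hp0 : 0 ≤ w ⬝ᵥ B⁻¹ *ᵥ w := psd_dot hBinv.posSemidef w
  set q := w ⬝ᵥ A⁻¹ *ᵥ w with hqdef
  set p := w ⬝ᵥ B⁻¹ *ᵥ w with hpdef
  have h1 : v ⬝ᵥ A *ᵥ v = q := by rw [hAv]; exact dotProduct_comm v w
  have h2 : z ⬝ᵥ B *ᵥ v = q := by
    rw [dot_symm hB.1 z v, hBz]; exact dotProduct_comm v w
  have h3 : z ⬝ᵥ B *ᵥ z = p := by rw [hBz]; exact dotProduct_comm z w
  have hcs := cs hB.1 hB.posSemidef z v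
  rw [h2, h3] at hcs
  have h4 : v ⬝ᵥ B *ᵥ v ≤ c ^ 2 * q := by rw [← h1]; exact hcomp v
  have h5 : q ^ 2 ≤ p * (c ^ 2 * q) :=
    hcs.trans (mul_le_mul_of_nonneg_left h4 hp0)
  rcases eq_or_lt_of_le hq0 with h | h
  · rw [← h, Real.sqrt_zero]
    positivity
  · have h6 : q ≤ c ^ 2 * p := by nlinarith
    calc Real.sqrt q ≤ Real.sqrt (c ^ 2 * p) := Real.sqrt_le_sqrt h6
      _ = c * Real.sqrt p := by
          rw [Real.sqrt_mul (sq_nonneg c), Real.sqrt_sq hc]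

lemma inv_quad_le_lam {A : Matrix (Fin d) (Fin d) ℝ} (hA : A.PosDef) {lam : ℝ}
    (hlam : 0 < lam) (hlow : ∀ v, lam * (v ⬝ᵥ v) ≤ v ⬝ᵥ A *ᵥ v) (u : Fin d → ℝ) :
    Real.sqrt (u ⬝ᵥ A⁻¹ *ᵥ u) ≤ (1 / Real.sqrt lam) * Real.sqrt (u ⬝ᵥ u) := by
  have hAinv := hA.inv
  have hAu : A * A⁻¹ = 1 := mul_nonsing_inv A (isUnit_iff_ne_zero.2 hA.det_pos.ne')
  set v := A⁻¹ *ᵥ u with hv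
  have hAv : A *ᵥ v = u := by rw [hv, mulVec_mulVec, hAu, one_mulVec]
  have hq0 : 0 ≤ u ⬝ᵥ A⁻¹ *ᵥ u := psd_dot hAinv.posSemidef u
  set q := u ⬝ᵥ A⁻¹ *ᵥ u with hqdef
  have h1 : v ⬝ᵥ A *ᵥ v = q := by rw [hAv]; exact dotProduct_comm v u
  have hvv : 0 ≤ v ⬝ᵥ v := Finset.sum_nonneg fun i _ => mul_self_nonneg _
  have huu : 0 ≤ u ⬝ᵥ u := Finset.sum_nonneg fun i _ => mul_self_nonneg _
  have h2 : lam * (v ⬝ᵥ v) ≤ q := by rw [← h1]; exact hlow v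
  have hcs : (u ⬝ᵥ v) ^ 2 ≤ (u ⬝ᵥ u) * (v ⬝ᵥ v) := by
    have := Finset.sum_mul_sq_le_sq_mul_sq Finset.univ u v
    simpa [dotProduct, sq] using this
  have hqv : q = u ⬝ᵥ v := rfl
  have h5 : lam * q ^ 2 ≤ (u ⬝ᵥ u) * q := by nlinarith [hcs, h2, huu]
  rcases eq_or_lt_of_le hq0 with h | h
  · rw [← h, Real.sqrt_zero]
    positivity
  · have h6 : q ≤ (u ⬝ᵥ u) / lam := by
      rw [le_div_iff₀ hlam]; nlinarith
    calc Real.sqrt q ≤ Real.sqrt ((u ⬝ᵥ u) / lam) := Real.sqrt_le_sqrt h6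
      _ = (1 / Real.sqrt lam) * Real.sqrt (u ⬝ᵥ u) := by
          rw [Real.sqrt_div huu lam, one_div, inv_mul_eq_div]

set_option maxHeartbeats 2000000 in
lemma quad_compare {I : Type*} [Fintype I] (J : Finset I) {lam : ℝ} (hlam : 0 < lam)
    (x y : I → Fin d → ℝ) (v : Fin d → ℝ) :
    v ⬝ᵥ (lam • (1 : Matrix (Fin d) (Fin d) ℝ) + ∑ j ∈ J, vecMulVec (y j) (y j)) *ᵥ v
      ≤ (1 + 2 * Real.sqrt (∑ j ∈ J, ∑ c, (x j c - y j c) ^ 2) / Real.sqrt lam) ^ 2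
        * (v ⬝ᵥ (lam • (1 : Matrix (Fin d) (Fin d) ℝ)
            + ∑ j ∈ J, vecMulVec (x j) (x j)) *ᵥ v) := by
  rw [quad_eq, quad_eq]
  set n2 := v ⬝ᵥ v with hn2
  set P := ∑ j ∈ J, (x j ⬝ᵥ v) ^ 2 with hP
  set Qy := ∑ j ∈ J, (y j ⬝ᵥ v) ^ 2 with hQ
  set D := ∑ j ∈ J, ∑ c, (x j c - y j c) ^ 2 with hD
  have hn20 : 0 ≤ n2 := Finset.sum_nonneg fun i _ => mul_self_nonneg _
  have hP0 : 0 ≤ P := Finset.sum_nonneg fun _ _ => sq_nonneg _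
  have hQ0 : 0 ≤ Qy := Finset.sum_nonneg fun _ _ => sq_nonneg _
  have hD0 : 0 ≤ D := Finset.sum_nonneg fun _ _ => Finset.sum_nonneg fun _ _ => sq_nonneg _
  set a := Real.sqrt (lam * n2 + P) with haa
  set b := Real.sqrt (lam * n2 + Qy) with hbb
  have ha2 : a ^ 2 = lam * n2 + P := Real.sq_sqrt (by positivity)
  have hb2 : b ^ 2 = lam * n2 + Qy := Real.sq_sqrt (by positivity)
  have ha0 : 0 ≤ a := Real.sqrt_nonneg _
  have hb0 : 0 ≤ b := Real.sqrt_nonneg _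
  set k := 2 * Real.sqrt D / Real.sqrt lam with hk
  have hk0 : 0 ≤ k := by positivity
  have hsl : 0 < Real.sqrt lam := Real.sqrt_pos.2 hlam
  have step1 : Qy - P = ∑ j ∈ J, (((y j - x j) ⬝ᵥ v) * ((y j + x j) ⬝ᵥ v)) := by
    rw [hQ, hP, ← Finset.sum_sub_distrib]
    refine Finset.sum_congr rfl fun j _ => ?_
    rw [sub_dotProduct, add_dotProduct]
    ring
  have step2 : (Qy - P) ^ 2
      ≤ (∑ j ∈ J, ((y j - x j) ⬝ᵥ v) ^ 2) * (∑ j ∈ J, ((y j + x j) ⬝ᵥ v) ^ 2) := by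
    rw [step1]
    exact Finset.sum_mul_sq_le_sq_mul_sq J _ _
  have step3 : (∑ j ∈ J, ((y j - x j) ⬝ᵥ v) ^ 2) ≤ D * n2 := by
    rw [hD, Finset.sum_mul]
    refine Finset.sum_le_sum fun j _ => ?_
    have hcs := Finset.sum_mul_sq_le_sq_mul_sq Finset.univ (fun c => y j c - x j c) v
    have h1 : (y j - x j) ⬝ᵥ v = ∑ c, (y j c - x j c) * v c := by
      simp [dotProduct]
    have h2 : (∑ c, (x j c - y j c) ^ 2) = ∑ c, (y j c - x j c) ^ 2 :=
      Finset.sum_congr rfl fun c _ => by ring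
    have h3 : n2 = ∑ c, v c ^ 2 := by simp [hn2, dotProduct, sq]
    rw [h1, h2, h3]
    exact hcs
  have step4 : (∑ j ∈ J, ((y j + x j) ⬝ᵥ v) ^ 2) ≤ 2 * (P + Qy) := by
    have hterm : ∀ j ∈ J, ((y j + x j) ⬝ᵥ v) ^ 2
        ≤ 2 * (y j ⬝ᵥ v) ^ 2 + 2 * (x j ⬝ᵥ v) ^ 2 := by
      intro j _
      rw [add_dotProduct]
      nlinarith [sq_nonneg ((y j ⬝ᵥ v) - (x j ⬝ᵥ v))]
    calc (∑ j ∈ J, ((y j + x j) ⬝ᵥ v) ^ 2)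
        ≤ ∑ j ∈ J, (2 * (y j ⬝ᵥ v) ^ 2 + 2 * (x j ⬝ᵥ v) ^ 2) := Finset.sum_le_sum hterm
      _ = 2 * (P + Qy) := by
          rw [Finset.sum_add_distrib, ← Finset.mul_sum, ← Finset.mul_sum, hP, hQ]; ring
  have hkey : (Qy - P) ^ 2 ≤ (k * a * (a + b)) ^ 2 := by
    have hka : (k * a * (a + b)) ^ 2 = (4 * D / lam) * a ^ 2 * (a + b) ^ 2 := by
      rw [hk, mul_pow, mul_pow, div_pow, mul_pow, Real.sq_sqrt hD0, Real.sq_sqrt hlam.le]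
      ring
    rw [hka]
    have h1 : (Qy - P) ^ 2 ≤ (D * n2) * (2 * (P + Qy)) := le_trans step2 (by
      apply mul_le_mul step3 step4 (Finset.sum_nonneg fun _ _ => sq_nonneg _) (by positivity))
    have h3 : P ≤ a ^ 2 := by rw [ha2]; nlinarith [mul_nonneg hlam.le hn20]
    have h4 : Qy ≤ b ^ 2 := by rw [hb2]; nlinarith [mul_nonneg hlam.le hn20]
    have h5 : a ^ 2 + b ^ 2 ≤ (a + b) ^ 2 := by nlinarith [mul_nonneg ha0 hb0]
    have h6 : n2 ≤ a ^ 2 / lam := by rw [le_div_iff₀ hlam]; nlinarith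
    calc (Qy - P) ^ 2 ≤ (D * n2) * (2 * (P + Qy)) := h1
      _ ≤ (D * (a ^ 2 / lam)) * (2 * ((a + b) ^ 2 + (a + b) ^ 2)) := by
          apply mul_le_mul (mul_le_mul_of_nonneg_left h6 hD0) ?_ (by positivity) (by positivity)
          nlinarith
      _ = (4 * D / lam) * a ^ 2 * (a + b) ^ 2 := by field_simp; ring
  have hS : Qy - P ≤ k * a * (a + b) := by
    have h7 : 0 ≤ k * a * (a + b) := by positivity
    have h8 := Real.sqrt_le_sqrt hkey
    rw [Real.sqrt_sq_eq_abs, Real.sqrt_sq h7] at h8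
    exact le_trans (le_abs_self _) h8
  have hfac : 0 ≤ ((1 + k) * a - b) * (a + b) := by nlinarith [hS, ha2, hb2]
  have hba : b ≤ (1 + k) * a := by
    rcases lt_or_eq_of_le (by positivity : (0:ℝ) ≤ a + b) with hab | hab
    · nlinarith [hfac, hab]
    · nlinarith [hab]
  rw [← ha2, ← hb2]
  nlinarith [mul_self_le_mul_self hb0 hba]

end TransferAux

open TransferAux

set_option maxHeartbeats 2000000 in
/-- transfer of elliptical-norm scores between two vector sequences.
With `A = λ I + ∑_{j∈J} x_j x_jᵀ` and `B = λ I + ∑_{j∈J} y_j y_jᵀ`, both spans of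
dimension at most `r`, for every `i`:
`‖x_i‖_{A⁻¹} ≤ (1/√λ)‖x_i − y_i‖₂ + (1 + (2√r/√λ)√(∑_{j∈J}‖x_j − y_j‖₂²))‖y_i‖_{B⁻¹}`. -/
theorem transfer_vector_score
    {d r : ℕ} {I : Type*} [Fintype I] (J : Finset I)
    (lam : ℝ) (hlam : 0 < lam)
    (x y : I → (Fin d → ℝ))
    (hx : Module.finrank ℝ (Submodule.span ℝ (Set.range x)) ≤ r)
    (hy : Module.finrank ℝ (Submodule.span ℝ (Set.range y)) ≤ r)
    (A B : Matrix (Fin d) (Fin d) ℝ)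
    (hA : A = lam • (1 : Matrix (Fin d) (Fin d) ℝ) + ∑ j ∈ J, vecMulVec (x j) (x j))
    (hB : B = lam • (1 : Matrix (Fin d) (Fin d) ℝ) + ∑ j ∈ J, vecMulVec (y j) (y j)) :
    ∀ i : I,
      Real.sqrt (x i ⬝ᵥ A⁻¹.mulVec (x i))
        ≤ (1 / Real.sqrt lam) * Real.sqrt (∑ c, (x i c - y i c) ^ 2)
          + (1 + (2 * Real.sqrt r / Real.sqrt lam)
                * Real.sqrt (∑ j ∈ J, ∑ c, (x j c - y j c) ^ 2))
            * Real.sqrt (y i ⬝ᵥ B⁻¹.mulVec (y i)) := by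
  have hApd : A.PosDef := by rw [hA]; exact posdef_aux J hlam x
  have hBpd : B.PosDef := by rw [hB]; exact posdef_aux J hlam y
  have hAinv := hApd.inv
  intro i
  rcases Nat.eq_zero_or_pos r with hr | hr
  · subst hr
    have hsp : Submodule.span ℝ (Set.range x) = ⊥ :=
      Submodule.finrank_eq_zero.mp (Nat.le_zero.mp hx)
    have hx0 : x i = 0 := by
      have hm : x i ∈ Submodule.span ℝ (Set.range x) := Submodule.subset_span ⟨i, rfl⟩
      rw [hsp, Submodule.mem_bot] at hm
      exact hm
    rw [hx0]
    simp only [zero_dotProduct, Real.sqrt_zero]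
    positivity
  · set D := ∑ j ∈ J, ∑ c, (x j c - y j c) ^ 2 with hD
    have hD0 : 0 ≤ D :=
      Finset.sum_nonneg fun _ _ => Finset.sum_nonneg fun _ _ => sq_nonneg _
    set k := 2 * Real.sqrt D / Real.sqrt lam with hk
    have hsl : 0 < Real.sqrt lam := Real.sqrt_pos.2 hlam
    have hc0 : (0:ℝ) ≤ 1 + k := by positivity
    have hcomp : ∀ v, v ⬝ᵥ B *ᵥ v ≤ (1 + k) ^ 2 * (v ⬝ᵥ A *ᵥ v) := by
      intro v
      rw [hA, hB]
      exact quad_compare J hlam x y v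
    have t3 : Real.sqrt (y i ⬝ᵥ A⁻¹ *ᵥ y i) ≤ (1 + k) * Real.sqrt (y i ⬝ᵥ B⁻¹ *ᵥ y i) :=
      key_transfer hApd hBpd hc0 hcomp (y i)
    have hlow : ∀ v, lam * (v ⬝ᵥ v) ≤ v ⬝ᵥ A *ᵥ v := by
      intro v
      rw [hA, quad_eq]
      have hnn : (0:ℝ) ≤ ∑ j ∈ J, (x j ⬝ᵥ v) ^ 2 := Finset.sum_nonneg fun _ _ => sq_nonneg _
      linarith
    set e := x i - y i with he
    have hxe : x i = e + y i := by rw [he]; abel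
    have t1 : Real.sqrt (x i ⬝ᵥ A⁻¹ *ᵥ x i)
        ≤ Real.sqrt (e ⬝ᵥ A⁻¹ *ᵥ e) + Real.sqrt (y i ⬝ᵥ A⁻¹ *ᵥ y i) := by
      conv_lhs => rw [hxe]
      exact sqrt_triangle hAinv.1 hAinv.posSemidef e (y i)
    have t2 : Real.sqrt (e ⬝ᵥ A⁻¹ *ᵥ e)
        ≤ (1 / Real.sqrt lam) * Real.sqrt (∑ c, (x i c - y i c) ^ 2) := by
      have hee : (∑ c, (x i c - y i c) ^ 2) = e ⬝ᵥ e := by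
        simp [he, dotProduct, sq, Pi.sub_apply]
      rw [hee]
      exact inv_quad_le_lam hApd hlam hlow e
    have hr1 : (1:ℝ) ≤ Real.sqrt r := by
      rw [show (1:ℝ) = Real.sqrt 1 from Real.sqrt_one.symm]
      exact Real.sqrt_le_sqrt (by exact_mod_cast hr)
    have hkk : 1 + k ≤ 1 + 2 * Real.sqrt r / Real.sqrt lam * Real.sqrt D := by
      have h2 : (2 * Real.sqrt D) / Real.sqrt lam
          ≤ (2 * Real.sqrt r * Real.sqrt D) / Real.sqrt lam := by
        gcongr
        nlinarith [hr1, Real.sqrt_nonneg D]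
      have h3 : 2 * Real.sqrt r / Real.sqrt lam * Real.sqrt D
          = (2 * Real.sqrt r * Real.sqrt D) / Real.sqrt lam := by ring
      rw [hk, h3]
      linarith
    calc Real.sqrt (x i ⬝ᵥ A⁻¹ *ᵥ x i)
        ≤ Real.sqrt (e ⬝ᵥ A⁻¹ *ᵥ e) + Real.sqrt (y i ⬝ᵥ A⁻¹ *ᵥ y i) := t1
      _ ≤ (1 / Real.sqrt lam) * Real.sqrt (∑ c, (x i c - y i c) ^ 2)
            + (1 + k) * Real.sqrt (y i ⬝ᵥ B⁻¹ *ᵥ y i) := add_le_add t2 t3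
      _ ≤ _ := by
          apply add_le_add le_rfl
          exact mul_le_mul_of_nonneg_right hkk (Real.sqrt_nonneg _)
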